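/- For every integer k ≥ 1 there exist an integer n > k and an n×n matrix X with entries in {0,1} such that X satisfies the k-configuration exhibiting condition but does not satisfy the convex Ramsey condition. -/

import Mathlib

/-- An `n × m` matrix (given as a function) has entries in `{0,1}`. -/
def Entries01 {n m : ℕ} (X : Fin n → Fin m → ℝ) : Prop :=
  ∀ i j, X i j = 0 ∨ X i j = 1

/-- The convex Ramsey condition: there is a probability vector `P` such that
`∑ i, P i * (X i j - X i k) ≤ 1/2` for every pair of distinct columns `j, k`. -/
def ConvexRamsey {n m : ℕ} (X : Fin n → Fin m → ℝ) : Prop :=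
  ∃ P : Fin n → ℝ, (∀ i, 0 ≤ P i) ∧ (∑ i, P i = 1) ∧
    ∀ j k : Fin m, j ≠ k → ∑ i, P i * (X i j - X i k) ≤ 1 / 2

/-- The `k`-configuration exhibiting condition: for every `0/1`-pattern `σ` of length `k`
and every strictly increasing choice of `k` columns, some row realizes the pattern
on those columns. -/
def ConfigExhibit {n m : ℕ} (k : ℕ) (X : Fin n → Fin m → ℝ) : Prop :=
  ∀ σ : Fin k → ℝ, (∀ i, σ i = 0 ∨ σ i = 1) →
    ∀ l : Fin k → Fin m, StrictMono l →
      ∃ j : Fin n, ∀ i : Fin k, X j (l i) = σ i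

namespace CRAux

open Finset

variable {n q : ℕ}

/-- decode a symbol into a 0/1 entry; columns `j < N` are "B-type" (1 iff symbol 0),
columns `j ≥ N` are "A-type" (1 iff symbol ≠ 0). -/
def bitf (N : ℕ) (j : Fin n) (a : Fin q) : Bool :=
  if (j : ℕ) < N then decide ((a : ℕ) = 0) else decide (¬ (a : ℕ) = 0)

lemma prod_ite_univ {ι : Type*} [Fintype ι] [DecidableEq ι] (s : Finset ι) (f : ι → ℕ) (c : ℕ) :
    (∏ j, (if j ∈ s then f j else c)) = (∏ j ∈ s, f j) * c ^ (Fintype.card ι - s.card) := by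
  rw [Finset.prod_ite, Finset.prod_const]
  congr 1
  · apply Finset.prod_congr _ (fun _ _ => rfl)
    simp [Finset.filter_mem_eq_inter]
  · congr 1
    rw [← Finset.card_compl]
    congr 1
    ext j; simp

lemma card_match_ge (N k : ℕ) (hq : 2 ≤ q)
    (σ : Fin k → Bool) (l : Fin k → Fin n) (hl : Function.Injective l) (hkn : k ≤ n) :
    q ^ (n - k) ≤ (univ.filter (fun v : Fin n → Fin q =>
      ∀ t, bitf N (l t) (v (l t)) = σ t)).card := by
  classical
  set A : Fin n → Finset (Fin q) :=
    fun j => univ.filter (fun a => ∀ t, l t = j → bitf N j a = σ t) with hA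
  have hsub : Fintype.piFinset A ⊆
      univ.filter (fun v : Fin n → Fin q => ∀ t, bitf N (l t) (v (l t)) = σ t) := by
    intro v hv
    rw [Fintype.mem_piFinset] at hv
    refine mem_filter.mpr ⟨mem_univ _, fun t => ?_⟩
    have := (mem_filter.mp (hv (l t))).2 t rfl
    exact this
  refine le_trans ?_ (Finset.card_le_card hsub)
  rw [Fintype.card_piFinset]
  have hge : ∀ j, (if j ∈ univ.image l then 1 else q) ≤ (A j).card := by
    intro j
    by_cases hj : j ∈ univ.image l
    · simp only [hj, if_true]
      rw [Nat.one_le_iff_ne_zero, ← Nat.pos_iff_ne_zero, Finset.card_pos]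
      obtain ⟨t₀, _, ht₀⟩ := Finset.mem_image.mp hj
      have hval : ∀ b : Bool, ∃ a : Fin q, bitf N j a = b := by
        intro b
        have h0 : (0:ℕ) < q := by omega
        have h1 : (1:ℕ) < q := by omega
        by_cases hN : (j : ℕ) < N
        · cases b
          · exact ⟨⟨1, h1⟩, by simp [bitf, hN]⟩
          · exact ⟨⟨0, h0⟩, by simp [bitf, hN]⟩
        · cases b
          · exact ⟨⟨0, h0⟩, by simp [bitf, hN]⟩
          · exact ⟨⟨1, h1⟩, by simp [bitf, hN]⟩
      obtain ⟨a, ha⟩ := hval (σ t₀)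
      refine ⟨a, mem_filter.mpr ⟨mem_univ _, fun t hlt => ?_⟩⟩
      have : t = t₀ := hl (by rw [hlt, ht₀])
      rw [this, ha]
    · simp only [hj, if_false]
      have : A j = univ := by
        apply Finset.eq_univ_of_forall
        intro a
        refine mem_filter.mpr ⟨mem_univ _, fun t hlt => absurd ?_ hj⟩
        exact Finset.mem_image.mpr ⟨t, mem_univ _, hlt⟩
      rw [this, Finset.card_univ, Fintype.card_fin]
  calc q ^ (n - k) ≤ q ^ (n - (univ.image l).card) := by
        apply Nat.pow_le_pow_right (by omega)
        apply Nat.sub_le_sub_left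
        exact le_trans Finset.card_image_le (by simp)
      _ = (∏ j ∈ univ.image l, 1) * q ^ (Fintype.card (Fin n) - (univ.image l).card) := by
        simp
      _ = ∏ j, (if j ∈ univ.image l then 1 else q) := (prod_ite_univ _ _ _).symm
      _ ≤ ∏ j, (A j).card := Finset.prod_le_prod (fun _ _ => Nat.zero_le _) (fun j _ => hge j)

variable {n q : ℕ}

lemma card_univ_fun : (univ : Finset (Fin n → Fin q)).card = q ^ n := by
  rw [Finset.card_univ, Fintype.card_fun]; simp

lemma card_fail_le (N k : ℕ) (hq : 2 ≤ q)
    (σ : Fin k → Bool) (l : Fin k → Fin n) (hl : Function.Injective l) (hkn : k ≤ n) :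
    (univ.filter (fun v : Fin n → Fin q =>
      ¬ ∀ t, bitf N (l t) (v (l t)) = σ t)).card ≤ q ^ n - q ^ (n - k) := by
  classical
  have h1 := Finset.card_filter_add_card_filter_not (s := (univ : Finset (Fin n → Fin q)))
    (p := fun v => ∀ t, bitf N (l t) (v (l t)) = σ t)
  have h2 := card_match_ge (n := n) (q := q) N k hq σ l hl hkn
  rw [card_univ_fun] at h1
  have h4 := Nat.eq_sub_of_add_eq' h1
  rw [h4]
  exact Nat.sub_le_sub_left h2 _

lemma card_tail_le (D : ℕ) (hD : D + 1 ≤ n) (hq : 1 ≤ q) :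
    (univ.filter (fun v : Fin n → Fin q =>
        D + 1 ≤ (univ.filter fun j => (v j : ℕ) = 0).card)).card
      ≤ n.choose (D + 1) * q ^ (n - (D + 1)) := by
  classical
  set Z : Finset (Fin q) := univ.filter (fun a : Fin q => (a : ℕ) = 0) with hZ
  have hZ1 : Z.card ≤ 1 := by
    apply Finset.card_le_one.mpr
    intro a ha b hb
    have := (mem_filter.mp ha).2
    have := (mem_filter.mp hb).2
    apply Fin.ext; omega
  have hsub : (univ.filter (fun v : Fin n → Fin q =>
        D + 1 ≤ (univ.filter fun j => (v j : ℕ) = 0).card)) ⊆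
      (Finset.powersetCard (D + 1) univ).biUnion
        (fun s => Fintype.piFinset (fun j => if j ∈ s then Z else univ)) := by
    intro v hv
    have hv2 := (mem_filter.mp hv).2
    obtain ⟨s, hs, hscard⟩ := Finset.exists_subset_card_eq hv2
    refine Finset.mem_biUnion.mpr ⟨s, ?_, ?_⟩
    · exact Finset.mem_powersetCard.mpr ⟨Finset.subset_univ _, hscard⟩
    · rw [Fintype.mem_piFinset]
      intro j
      by_cases hj : j ∈ s
      · simp only [hj, if_true, hZ]
        exact mem_filter.mpr ⟨mem_univ _, (mem_filter.mp (hs hj)).2⟩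
      · simp [hj]
  refine le_trans (Finset.card_le_card hsub) (le_trans Finset.card_biUnion_le ?_)
  have hbound : ∀ s ∈ Finset.powersetCard (D + 1) (univ : Finset (Fin n)),
      (Fintype.piFinset (fun j => if j ∈ s then Z else univ)).card ≤ q ^ (n - (D + 1)) := by
    intro s hs
    obtain ⟨-, hscard⟩ := Finset.mem_powersetCard.mp hs
    rw [Fintype.card_piFinset]
    calc ∏ j, (if j ∈ s then Z else univ).card
        = ∏ j, (if j ∈ s then Z.card else (univ : Finset (Fin q)).card) := by
          apply Finset.prod_congr rfl; intro j _; exact apply_ite _ _ _ _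
      _ ≤ ∏ j, (if j ∈ s then 1 else q) := by
          apply Finset.prod_le_prod (fun _ _ => Nat.zero_le _)
          intro j _
          by_cases hj : j ∈ s <;> simp [hj, hZ1, Finset.card_univ]
      _ = (∏ j ∈ s, 1) * q ^ (Fintype.card (Fin n) - s.card) := prod_ite_univ _ _ _
      _ = q ^ (n - (D + 1)) := by simp [hscard]
  calc ∑ s ∈ Finset.powersetCard (D + 1) (univ : Finset (Fin n)),
        (Fintype.piFinset (fun j => if j ∈ s then Z else univ)).card
      ≤ ∑ s ∈ Finset.powersetCard (D + 1) (univ : Finset (Fin n)), q ^ (n - (D + 1)) :=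
        Finset.sum_le_sum hbound
    _ = n.choose (D + 1) * q ^ (n - (D + 1)) := by
        rw [Finset.sum_const, Finset.card_powersetCard, smul_eq_mul]; simp

lemma card_row_le (S : Finset (Fin n → Fin q)) (i₀ : Fin n) :
    (univ.filter (fun ω : Fin n → Fin n → Fin q => ω i₀ ∈ S)).card
      ≤ S.card * (q ^ n) ^ (n - 1) := by
  classical
  have hsub : (univ.filter (fun ω : Fin n → Fin n → Fin q => ω i₀ ∈ S)) ⊆
      Fintype.piFinset (fun i => if i ∈ ({i₀} : Finset (Fin n)) then S else univ) := by
    intro ω hω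
    rw [Fintype.mem_piFinset]
    intro i
    by_cases hi : i ∈ ({i₀} : Finset (Fin n))
    · rw [Finset.mem_singleton] at hi
      simp only [hi, Finset.mem_singleton, if_pos rfl]
      exact (mem_filter.mp hω).2
    · simp [hi]
  refine le_trans (Finset.card_le_card hsub) ?_
  rw [Fintype.card_piFinset]
  calc ∏ i, (if i ∈ ({i₀} : Finset (Fin n)) then S else univ).card
      = ∏ i, (if i ∈ ({i₀} : Finset (Fin n)) then S.card else (univ : Finset (Fin n → Fin q)).card) := by
        apply Finset.prod_congr rfl; intro j _; exact apply_ite _ _ _ _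
    _ = (∏ i ∈ ({i₀} : Finset (Fin n)), S.card) * ((univ : Finset (Fin n → Fin q)).card) ^ (Fintype.card (Fin n) - ({i₀} : Finset (Fin n)).card) := prod_ite_univ _ _ _
    _ = S.card * (q ^ n) ^ (n - 1) := by
        rw [Finset.prod_singleton, card_univ_fun]
        simp
    _ ≤ S.card * (q ^ n) ^ (n - 1) := le_refl _

lemma card_allrows_le (S : Finset (Fin n → Fin q)) :
    (univ.filter (fun ω : Fin n → Fin n → Fin q => ∀ i, ω i ∈ S)).card ≤ S.card ^ n := by
  classical
  have hsub : (univ.filter (fun ω : Fin n → Fin n → Fin q => ∀ i, ω i ∈ S)) ⊆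
      Fintype.piFinset (fun _ : Fin n => S) := by
    intro ω hω
    rw [Fintype.mem_piFinset]
    exact (mem_filter.mp hω).2
  refine le_trans (Finset.card_le_card hsub) ?_
  rw [Fintype.card_piFinset, Finset.prod_const]
  simp


def Good1 (k N : ℕ) (ω : Fin n → Fin n → Fin q) : Prop :=
  ∀ σ : Fin k → Bool, ∀ l : Fin k → Fin n, Function.Injective l →
    ∃ i, ∀ t, bitf N (l t) (ω i (l t)) = σ t

def Good2 (D : ℕ) (ω : Fin n → Fin n → Fin q) : Prop :=
  ∀ i, (univ.filter (fun j => (ω i j : ℕ) = 0)).card ≤ D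

set_option synthInstance.maxHeartbeats 1000000 in
lemma exists_good (k N D : ℕ) (hq : 2 ≤ q) (hkn : k ≤ n) (hD : D + 1 ≤ n)
    (harith : 2 ^ k * n ^ k * (q ^ n - q ^ (n - k)) ^ n
        + n * (n.choose (D + 1) * q ^ (n - (D + 1)) * (q ^ n) ^ (n - 1)) < (q ^ n) ^ n) :
    ∃ ω : Fin n → Fin n → Fin q, Good1 k N ω ∧ Good2 D ω := by
  classical
  set Bad1 : Finset (Fin n → Fin n → Fin q) := univ.filter (fun ω => ¬ Good1 k N ω) with hBad1
  set Bad2 : Finset (Fin n → Fin n → Fin q) := univ.filter (fun ω => ¬ Good2 D ω) with hBad2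
  -- bound on Bad1
  have hB1 : Bad1.card ≤ 2 ^ k * n ^ k * (q ^ n - q ^ (n - k)) ^ n := by
    have hsub : Bad1 ⊆ (univ : Finset ((Fin k → Bool) × (Fin k → Fin n))).biUnion
        (fun p => univ.filter (fun ω : Fin n → Fin n → Fin q =>
          Function.Injective p.2 ∧ ∀ i, ¬ ∀ t, bitf N (p.2 t) (ω i (p.2 t)) = p.1 t)) := by
      intro ω hω
      have hng : ¬ Good1 k N ω := (mem_filter.mp hω).2
      rw [Good1] at hng
      push_neg at hng
      obtain ⟨σ, l, hl, hno⟩ := hng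
      exact Finset.mem_biUnion.mpr ⟨(σ, l), mem_univ _,
        mem_filter.mpr ⟨mem_univ _, hl, fun i => by rcases hno i with ⟨t, ht⟩; exact fun hall => ht (hall t)⟩⟩
    refine le_trans (Finset.card_le_card hsub) (le_trans Finset.card_biUnion_le ?_)
    have hbound : ∀ p : (Fin k → Bool) × (Fin k → Fin n),
        (univ.filter (fun ω : Fin n → Fin n → Fin q =>
          Function.Injective p.2 ∧ ∀ i, ¬ ∀ t, bitf N (p.2 t) (ω i (p.2 t)) = p.1 t)).card
        ≤ (q ^ n - q ^ (n - k)) ^ n := by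
      intro p
      by_cases hinj : Function.Injective p.2
      · set S : Finset (Fin n → Fin q) :=
          univ.filter (fun v => ¬ ∀ t, bitf N (p.2 t) (v (p.2 t)) = p.1 t) with hS
        have hsub2 : (univ.filter (fun ω : Fin n → Fin n → Fin q =>
            Function.Injective p.2 ∧ ∀ i, ¬ ∀ t, bitf N (p.2 t) (ω i (p.2 t)) = p.1 t))
            ⊆ univ.filter (fun ω : Fin n → Fin n → Fin q => ∀ i, ω i ∈ S) := by
          intro ω hω
          refine mem_filter.mpr ⟨mem_univ _, fun i => ?_⟩
          exact mem_filter.mpr ⟨mem_univ _, (mem_filter.mp hω).2.2 i⟩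
        refine le_trans (Finset.card_le_card hsub2) (le_trans (card_allrows_le S) ?_)
        exact Nat.pow_le_pow_left (card_fail_le N k hq p.1 p.2 hinj hkn) n
      · have : (univ.filter (fun ω : Fin n → Fin n → Fin q =>
            Function.Injective p.2 ∧ ∀ i, ¬ ∀ t, bitf N (p.2 t) (ω i (p.2 t)) = p.1 t)) = ∅ := by
          apply Finset.filter_false_of_mem
          intro ω _ hc
          exact hinj hc.1
        rw [this]
        simp
    calc ∑ p ∈ (univ : Finset ((Fin k → Bool) × (Fin k → Fin n))),
          (univ.filter (fun ω : Fin n → Fin n → Fin q =>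
            Function.Injective p.2 ∧ ∀ i, ¬ ∀ t, bitf N (p.2 t) (ω i (p.2 t)) = p.1 t)).card
        ≤ ∑ p ∈ (univ : Finset ((Fin k → Bool) × (Fin k → Fin n))), (q ^ n - q ^ (n - k)) ^ n :=
          Finset.sum_le_sum (fun p _ => hbound p)
      _ = 2 ^ k * n ^ k * (q ^ n - q ^ (n - k)) ^ n := by
          rw [Finset.sum_const, Finset.card_univ, smul_eq_mul]
          congr 1
          rw [Fintype.card_prod, Fintype.card_fun, Fintype.card_fun, Fintype.card_bool,
            Fintype.card_fin, Fintype.card_fin]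
  -- bound on Bad2
  have hB2 : Bad2.card ≤ n * (n.choose (D + 1) * q ^ (n - (D + 1)) * (q ^ n) ^ (n - 1)) := by
    set T : Finset (Fin n → Fin q) :=
      univ.filter (fun v : Fin n → Fin q => D + 1 ≤ (univ.filter fun j => (v j : ℕ) = 0).card) with hT
    have hsub : Bad2 ⊆ (univ : Finset (Fin n)).biUnion
        (fun i => univ.filter (fun ω : Fin n → Fin n → Fin q => ω i ∈ T)) := by
      intro ω hω
      have hng : ¬ Good2 D ω := (mem_filter.mp hω).2
      rw [Good2] at hng
      push_neg at hng
      obtain ⟨i, hi⟩ := hng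
      refine Finset.mem_biUnion.mpr ⟨i, mem_univ _, mem_filter.mpr ⟨mem_univ _, ?_⟩⟩
      exact mem_filter.mpr ⟨mem_univ _, by omega⟩
    refine le_trans (Finset.card_le_card hsub) (le_trans Finset.card_biUnion_le ?_)
    have hbound : ∀ i : Fin n,
        (univ.filter (fun ω : Fin n → Fin n → Fin q => ω i ∈ T)).card
          ≤ n.choose (D + 1) * q ^ (n - (D + 1)) * (q ^ n) ^ (n - 1) := by
      intro i
      refine le_trans (card_row_le T i) ?_
      have := card_tail_le (n := n) (q := q) D hD (by omega)
      exact Nat.mul_le_mul_right _ this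
    calc ∑ i ∈ (univ : Finset (Fin n)),
          (univ.filter (fun ω : Fin n → Fin n → Fin q => ω i ∈ T)).card
        ≤ ∑ _i ∈ (univ : Finset (Fin n)), n.choose (D + 1) * q ^ (n - (D + 1)) * (q ^ n) ^ (n - 1) :=
          Finset.sum_le_sum (fun i _ => hbound i)
      _ = n * (n.choose (D + 1) * q ^ (n - (D + 1)) * (q ^ n) ^ (n - 1)) := by
          rw [Finset.sum_const, Finset.card_univ, smul_eq_mul, Fintype.card_fin]
  -- conclude
  by_contra hcon
  push_neg at hcon
  have hcover : (univ : Finset (Fin n → Fin n → Fin q)) ⊆ Bad1 ∪ Bad2 := by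
    intro ω _
    rcases Classical.em (Good1 k N ω) with h1 | h1
    · exact Finset.mem_union_right _ (mem_filter.mpr ⟨mem_univ _, hcon ω h1⟩)
    · exact Finset.mem_union_left _ (mem_filter.mpr ⟨mem_univ _, h1⟩)
  have hcard : (univ : Finset (Fin n → Fin n → Fin q)).card ≤ Bad1.card + Bad2.card :=
    le_trans (Finset.card_le_card hcover) (Finset.card_union_le _ _)
  have huniv : (univ : Finset (Fin n → Fin n → Fin q)).card = (q ^ n) ^ n := by
    rw [Finset.card_univ, Fintype.card_fun, Fintype.card_fun]
    simp
  omega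

lemma aux_pow (a : ℕ) : ∀ m : ℕ, a ^ m * (a + m) ≤ (a + 1) ^ (m + 1)
  | 0 => by simp
  | (m + 1) => by
      have ih := aux_pow a m
      calc a ^ (m + 1) * (a + (m + 1)) = a ^ m * (a * a + a * m + a) := by
            rw [pow_succ]; ring
        _ ≤ a ^ m * (a * a + a * m + a + m) := by
            apply Nat.mul_le_mul_left; omega
        _ = (a + 1) * (a ^ m * (a + m)) := by ring
        _ ≤ (a + 1) * (a + 1) ^ (m + 1) := Nat.mul_le_mul_left _ ih
        _ = (a + 1) ^ (m + 2) := by rw [← pow_succ']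

lemma bern (Q : ℕ) (hQ : 1 ≤ Q) : 2 * (Q - 1) ^ Q ≤ Q ^ Q := by
  obtain ⟨a, rfl⟩ : ∃ a, Q = a + 1 := ⟨Q - 1, by omega⟩
  have h := aux_pow a a
  calc 2 * (a + 1 - 1) ^ (a + 1) = a ^ a * (a + a) := by
        simp [pow_succ]; ring
    _ ≤ (a + 1) ^ (a + 1) := h

lemma choose_le_two_pow {n r : ℕ} (h : r ≤ n) : n.choose r ≤ 2 ^ n := by
  rw [← Nat.sum_range_choose n]
  exact Finset.single_le_sum (f := fun i => n.choose i)
    (fun _ _ => Nat.zero_le _) (Finset.mem_range.mpr (by omega))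

lemma exp_lemma (k : ℕ) (hk : 1 ≤ k) : k + 1 + (37 * k + 4) * k < 2 ^ (5 * k + 4) := by
  have h1 : k < 2 ^ k := Nat.lt_two_pow_self (n := k)
  have h2 : k * k < 2 ^ (2 * k) := by
    calc k * k ≤ k * 2 ^ k := Nat.mul_le_mul_left k h1.le
      _ < 2 ^ k * 2 ^ k := by
          apply mul_lt_mul_of_pos_right h1 (Nat.pow_pos (by norm_num))
      _ = 2 ^ (2 * k) := by rw [← pow_add]; congr 1; omega
  have h3 : k + 1 + (37 * k + 4) * k = 37 * (k * k) + (5 * k + 1) := by ring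
  rw [h3]
  calc 37 * (k * k) + (5 * k + 1) ≤ 43 * (k * k) := by nlinarith
    _ < 43 * 2 ^ (2 * k) := by
        apply mul_lt_mul_of_pos_left h2 (by norm_num)
    _ ≤ 2 ^ (2 * k + 6) := by
        rw [pow_add]
        calc 43 * 2 ^ (2 * k) ≤ 64 * 2 ^ (2 * k) := Nat.mul_le_mul_right _ (by norm_num)
          _ = 2 ^ (2 * k) * 2 ^ 6 := by ring
    _ ≤ 2 ^ (5 * k + 4) := Nat.pow_le_pow_right (by norm_num) (by omega)

lemma main_arith (k : ℕ) (hk : 1 ≤ k) :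
    ∀ q n D : ℕ, q = 2 ^ 32 → D = 2 ^ (37 * k) → n = 16 * D →
    2 ^ k * n ^ k * (q ^ n - q ^ (n - k)) ^ n
      + n * (n.choose (D + 1) * q ^ (n - (D + 1)) * (q ^ n) ^ (n - 1)) < (q ^ n) ^ n := by
  intro q n D hq hDv hn
  have hDpos : 1 ≤ D := by rw [hDv]; exact Nat.one_le_two_pow
  have hne : n = 2 ^ (37 * k + 4) := by
    rw [hn, hDv, show (16 : ℕ) = 2 ^ 4 from rfl, ← pow_add]
    congr 1; omega
  have hkn : k ≤ n := by
    have := Nat.lt_two_pow_self (n := k)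
    have h2 : (2:ℕ) ^ k ≤ 2 ^ (37 * k + 4) := Nat.pow_le_pow_right (by norm_num) (by omega)
    omega
  have hqpos : 0 < q := by rw [hq]; positivity
  have hD1n : D + 1 ≤ n := by omega
  have hnpos : 0 < n := by omega
  -- Part A
  have hA : 2 * (2 ^ k * n ^ k * (q ^ n - q ^ (n - k)) ^ n) < (q ^ n) ^ n := by
    set Q := 2 ^ (32 * k) with hQdef
    set M := 2 ^ (5 * k + 4) with hMdef
    have hQq : q ^ k = Q := by rw [hq, ← pow_mul]
    have hQ2 : 2 ≤ Q := by
      rw [hQdef]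
      calc (2:ℕ) = 2 ^ 1 := rfl
        _ ≤ 2 ^ (32 * k) := Nat.pow_le_pow_right (by norm_num) (by omega)
    have hQM : n = Q * M := by
      rw [hne, hQdef, hMdef, ← pow_add]
      congr 1; ring
    have hsplit : q ^ n - q ^ (n - k) = q ^ (n - k) * (q ^ k - 1) := by
      have h1 : q ^ (n - k) * q ^ k = q ^ n := by rw [← pow_add]; congr 1; omega
      rw [Nat.mul_sub, mul_one, h1]
    have hgoalform : (q ^ n) ^ n = (q ^ (n - k)) ^ n * Q ^ n := by
      rw [← hQq, ← mul_pow, ← pow_add]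
      congr 2; omega
    rw [hsplit, mul_pow, hgoalform, hQq]
    have hQ1pos : 0 < (Q - 1) ^ n := by
      apply Nat.pow_pos; omega
    have h2 : 2 ^ M * (Q - 1) ^ n ≤ Q ^ n := by
      have hb := bern Q (by omega)
      have hbM : (2 * (Q - 1) ^ Q) ^ M ≤ (Q ^ Q) ^ M := Nat.pow_le_pow_left hb M
      rw [mul_pow] at hbM
      calc 2 ^ M * (Q - 1) ^ n = 2 ^ M * ((Q - 1) ^ Q) ^ M := by rw [hQM, pow_mul]
        _ ≤ (Q ^ Q) ^ M := hbM
        _ = Q ^ n := by rw [hQM, pow_mul]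
    have h3 : 2 * 2 ^ k * n ^ k < 2 ^ M := by
      have : 2 * 2 ^ k * n ^ k = 2 ^ (k + 1 + (37 * k + 4) * k) := by
        rw [hne, ← pow_mul, pow_add, pow_add]
        ring
      rw [this, hMdef]
      exact Nat.pow_lt_pow_right (by norm_num) (exp_lemma k hk)
    have hcore : 2 * (2 ^ k * n ^ k * (Q - 1) ^ n) < Q ^ n := by
      calc 2 * (2 ^ k * n ^ k * (Q - 1) ^ n) = (2 * 2 ^ k * n ^ k) * (Q - 1) ^ n := by ring
        _ < 2 ^ M * (Q - 1) ^ n := mul_lt_mul_of_pos_right h3 hQ1pos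
        _ ≤ Q ^ n := h2
    calc 2 * (2 ^ k * n ^ k * ((q ^ (n - k)) ^ n * (Q - 1) ^ n))
        = (q ^ (n - k)) ^ n * (2 * (2 ^ k * n ^ k * (Q - 1) ^ n)) := by ring
      _ < (q ^ (n - k)) ^ n * Q ^ n := by
          exact mul_lt_mul_of_pos_left hcore (Nat.pow_pos (Nat.pow_pos hqpos))
  -- Part B
  have hB : 2 * (n * (n.choose (D + 1) * q ^ (n - (D + 1)) * (q ^ n) ^ (n - 1))) ≤ (q ^ n) ^ n := by
    have hsplitn : (q ^ n) ^ n = q ^ n * (q ^ n) ^ (n - 1) := by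
      have h0 : (q ^ n) ^ n = (q ^ n) ^ (1 + (n - 1)) := by congr 1; omega
      rw [h0, pow_add, pow_one]
    rw [hsplitn]
    have hsplitq : q ^ n = q ^ (D + 1) * q ^ (n - (D + 1)) := by
      rw [← pow_add]; congr 1; omega
    have h37 : 37 * k < D := by rw [hDv]; exact Nat.lt_two_pow_self
    have h2 : 2 * (n * n.choose (D + 1)) ≤ q ^ (D + 1) := by
      have hch : n.choose (D + 1) ≤ 2 ^ n := choose_le_two_pow hD1n
      calc 2 * (n * n.choose (D + 1)) ≤ 2 * (n * 2 ^ n) := by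
            apply Nat.mul_le_mul_left
            exact Nat.mul_le_mul_left _ hch
        _ = 2 ^ (1 + (37 * k + 4) + 16 * D) := by
            have e1 : (2:ℕ) ^ n = 2 ^ (16 * D) := by rw [hn]
            rw [e1, hne]; ring
        _ ≤ 2 ^ (32 * D + 32) := by
            apply Nat.pow_le_pow_right (by norm_num)
            omega
        _ = q ^ (D + 1) := by
            rw [hq, ← pow_mul]
            congr 1
            try ring
            try omega
    have h1 : 2 * (n * (n.choose (D + 1) * q ^ (n - (D + 1)))) ≤ q ^ n := by
      rw [hsplitq]
      calc 2 * (n * (n.choose (D + 1) * q ^ (n - (D + 1))))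
          = (2 * (n * n.choose (D + 1))) * q ^ (n - (D + 1)) := by ring
        _ ≤ q ^ (D + 1) * q ^ (n - (D + 1)) := Nat.mul_le_mul_right _ h2
    calc 2 * (n * (n.choose (D + 1) * q ^ (n - (D + 1)) * (q ^ n) ^ (n - 1)))
        = (2 * (n * (n.choose (D + 1) * q ^ (n - (D + 1))))) * (q ^ n) ^ (n - 1) := by ring
      _ ≤ q ^ n * (q ^ n) ^ (n - 1) := Nat.mul_le_mul_right _ h1
  omega


lemma card_filter_lt (n N : ℕ) (h : N ≤ n) :
    ((univ : Finset (Fin n)).filter (fun j : Fin n => (j : ℕ) < N)).card = N := by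
  classical
  have himg : (univ : Finset (Fin n)).filter (fun j : Fin n => (j : ℕ) < N)
      = (univ : Finset (Fin N)).image (Fin.castLE h) := by
    ext j
    simp only [mem_filter, mem_univ, true_and, Finset.mem_image]
    constructor
    · intro hj
      refine ⟨⟨(j : ℕ), hj⟩, ?_⟩
      apply Fin.ext
      simp
    · rintro ⟨a, -, rfl⟩
      simpa using a.isLt
  rw [himg, Finset.card_image_of_injective _ (Fin.castLE_injective h)]
  simp


end CRAux

/-- For every integer `k ≥ 1` there exist `n > k` and an `n × n` matrix with entries
in `{0,1}` satisfying the `k`-configuration exhibiting condition but not the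
convex Ramsey condition. -/
theorem exists_config_exhibiting_not_convexRamsey (k : ℕ) (hk : 1 ≤ k) :
    ∃ n : ℕ, k < n ∧ ∃ X : Fin n → Fin n → ℝ,
      Entries01 X ∧ ConfigExhibit k X ∧ ¬ ConvexRamsey X := by
  set D : ℕ := 2 ^ (37 * k) with hD
  set n : ℕ := 16 * D with hn
  set N : ℕ := 8 * D with hN
  have hDpos : 1 ≤ D := Nat.one_le_two_pow
  have hkD : k < D := by
    rw [hD]
    calc k < 2 ^ k := Nat.lt_two_pow_self (n := k)
      _ ≤ 2 ^ (37 * k) := Nat.pow_le_pow_right (by norm_num) (by omega)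
  have hkn : k ≤ n := by omega
  obtain ⟨ω, hG1, hG2⟩ := CRAux.exists_good (q := 2 ^ 32) (n := n) k N D
    (by norm_num) hkn (by omega) (CRAux.main_arith k hk (2 ^ 32) n D rfl hD hn)
  set X : Fin n → Fin n → ℝ := fun i j => if CRAux.bitf N j (ω i j) = true then 1 else 0 with hX
  refine ⟨n, by omega, X, ?_, ?_, ?_⟩
  · -- Entries01
    intro i j
    by_cases hb : CRAux.bitf N j (ω i j) = true
    · right; simp [hX, hb]
    · left; simp [hX, hb]
  · -- ConfigExhibit
    intro σ hσ l hl
    obtain ⟨i, hi⟩ := hG1 (fun t => @decide (σ t = 1) (Classical.propDecidable _)) l hl.injective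
    refine ⟨i, fun t => ?_⟩
    have ht := hi t
    by_cases hb : CRAux.bitf N (l t) (ω i (l t)) = true
    · rw [hb] at ht
      have h1 : σ t = 1 := of_decide_eq_true ht.symm
      simp [hX, hb, h1]
    · have hf : CRAux.bitf N (l t) (ω i (l t)) = false := by
        cases hcb : CRAux.bitf N (l t) (ω i (l t))
        · rfl
        · exact absurd hcb hb
      rw [hf] at ht
      have hne1 : ¬ σ t = 1 := of_decide_eq_false ht.symm
      rcases hσ t with h0 | h1
      · simp [hX, hf, h0]
      · exact absurd h1 hne1
  · -- ¬ ConvexRamsey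
    rintro ⟨P, hP0, hP1, hCR⟩
    set Bset := (Finset.univ : Finset (Fin n)).filter (fun j : Fin n => (j : ℕ) < N) with hBs
    set Aset := (Finset.univ : Finset (Fin n)).filter (fun j : Fin n => ¬ (j : ℕ) < N) with hAs
    have hBcard : Bset.card = N := CRAux.card_filter_lt n N (by omega)
    have hAcard : Aset.card = N := by
      have h1 : Bset.card + Aset.card = (Finset.univ : Finset (Fin n)).card :=
        Finset.card_filter_add_card_filter_not (fun j : Fin n => (j : ℕ) < N)
      have h2 : (Finset.univ : Finset (Fin n)).card = n := by
        rw [Finset.card_univ, Fintype.card_fin]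
      omega
    -- row sums are bounded by D
    have hrowB : ∀ i : Fin n, ∑ j ∈ Bset, X i j ≤ (D : ℝ) := by
      intro i
      have hpt : ∀ j ∈ Bset, X i j = if ((ω i j : ℕ) = 0) then (1 : ℝ) else 0 := by
        intro j hj
        have hjN : (j : ℕ) < N := (Finset.mem_filter.mp hj).2
        simp [hX, CRAux.bitf, hjN]
      rw [Finset.sum_congr rfl hpt, Finset.sum_boole]
      have hcle : (Bset.filter (fun j => (ω i j : ℕ) = 0)).card ≤ D := by
        refine le_trans (Finset.card_le_card ?_) (hG2 i)
        exact Finset.filter_subset_filter _ (Finset.subset_univ _)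
      exact_mod_cast hcle
    have hrowA : ∀ i : Fin n, ∑ j ∈ Aset, ((1 : ℝ) - X i j) ≤ (D : ℝ) := by
      intro i
      have hpt : ∀ j ∈ Aset, (1 : ℝ) - X i j = if ((ω i j : ℕ) = 0) then (1 : ℝ) else 0 := by
        intro j hj
        have hjN : ¬ (j : ℕ) < N := (Finset.mem_filter.mp hj).2
        have h0' : (ω i j = 0) ↔ (ω i j : ℕ) = 0 := ⟨fun h => by rw [h]; rfl, fun h => Fin.ext h⟩
        by_cases h0 : (ω i j : ℕ) = 0 <;> simp [hX, CRAux.bitf, hjN, h0, h0']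
      rw [Finset.sum_congr rfl hpt, Finset.sum_boole]
      have hcle : (Aset.filter (fun j => (ω i j : ℕ) = 0)).card ≤ D := by
        refine le_trans (Finset.card_le_card ?_) (hG2 i)
        exact Finset.filter_subset_filter _ (Finset.subset_univ _)
      exact_mod_cast hcle
    -- average over B-columns
    have hBavg : ∑ j ∈ Bset, (∑ i, P i * X i j) ≤ (D : ℝ) := by
      rw [Finset.sum_comm]
      calc ∑ i, ∑ j ∈ Bset, P i * X i j = ∑ i, P i * (∑ j ∈ Bset, X i j) := by
            refine Finset.sum_congr rfl (fun i _ => ?_)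
            rw [Finset.mul_sum]
        _ ≤ ∑ i, P i * (D : ℝ) :=
            Finset.sum_le_sum (fun i _ => mul_le_mul_of_nonneg_left (hrowB i) (hP0 i))
        _ = (D : ℝ) := by rw [← Finset.sum_mul, hP1, one_mul]
    have hAavg : ∑ j ∈ Aset, ((1 : ℝ) - ∑ i, P i * X i j) ≤ (D : ℝ) := by
      have hpt : ∀ j ∈ Aset, (1 : ℝ) - ∑ i, P i * X i j = ∑ i, P i * ((1 : ℝ) - X i j) := by
        intro j _
        have hh : ∑ i, P i * ((1 : ℝ) - X i j) = (∑ i, P i) - ∑ i, P i * X i j := by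
          rw [← Finset.sum_sub_distrib]
          refine Finset.sum_congr rfl (fun i _ => ?_)
          ring
        rw [hh, hP1]
      rw [Finset.sum_congr rfl hpt, Finset.sum_comm]
      calc ∑ i, ∑ j ∈ Aset, P i * ((1 : ℝ) - X i j)
          = ∑ i, P i * (∑ j ∈ Aset, ((1 : ℝ) - X i j)) := by
            refine Finset.sum_congr rfl (fun i _ => ?_)
            rw [Finset.mul_sum]
        _ ≤ ∑ i, P i * (D : ℝ) :=
            Finset.sum_le_sum (fun i _ => mul_le_mul_of_nonneg_left (hrowA i) (hP0 i))
        _ = (D : ℝ) := by rw [← Finset.sum_mul, hP1, one_mul]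
    have hND : (N : ℝ) * (1 / 8 : ℝ) = (D : ℝ) := by rw [hN]; push_cast; ring
    have hBne : Bset.Nonempty := by rw [← Finset.card_pos, hBcard]; omega
    have hAne : Aset.Nonempty := by rw [← Finset.card_pos, hAcard]; omega
    have hj0 : ∃ j ∈ Bset, (∑ i, P i * X i j) ≤ 1 / 8 := by
      by_contra hno
      push_neg at hno
      have hlt : ∑ j ∈ Bset, (1 / 8 : ℝ) < ∑ j ∈ Bset, (∑ i, P i * X i j) :=
        Finset.sum_lt_sum_of_nonempty hBne (fun j hj => hno j hj)
      rw [Finset.sum_const, hBcard, nsmul_eq_mul, hND] at hlt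
      linarith
    have hj1 : ∃ j ∈ Aset, (1 : ℝ) - (∑ i, P i * X i j) ≤ 1 / 8 := by
      by_contra hno
      push_neg at hno
      have hlt : ∑ j ∈ Aset, (1 / 8 : ℝ) < ∑ j ∈ Aset, ((1 : ℝ) - ∑ i, P i * X i j) :=
        Finset.sum_lt_sum_of_nonempty hAne (fun j hj => hno j hj)
      rw [Finset.sum_const, hAcard, nsmul_eq_mul, hND] at hlt
      linarith
    obtain ⟨j0, hj0B, hj0m⟩ := hj0
    obtain ⟨j1, hj1A, hj1m⟩ := hj1
    have hnej : j1 ≠ j0 := by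
      intro h
      have h1 := (Finset.mem_filter.mp hj1A).2
      have h0 := (Finset.mem_filter.mp hj0B).2
      rw [h] at h1
      exact h1 h0
    have hcr := hCR j1 j0 hnej
    have hsum : ∑ i, P i * (X i j1 - X i j0)
        = (∑ i, P i * X i j1) - ∑ i, P i * X i j0 := by
      rw [← Finset.sum_sub_distrib]
      refine Finset.sum_congr rfl (fun i _ => ?_)
      ring
    rw [hsum] at hcr
    linarith
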